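/- Let 1 ≤ p ≤ r be integers such that [r]^(p) has the fixed intersection property, let e be an r-element set, and for each p-subset A ⊆ e choose a p-set I_A ⊆ [r]. If the sets I_A are not all equal, then there is a bijection σ : e → [r] (an ordering of e) such that for every p-subset A ⊆ e, σ(A) ≠ I_A. -/

import Mathlib

/-- `[r]^(p)` has the fixed intersection property. -/
def FixedIntersectionProperty (r p : ℕ) : Prop :=
  ∀ f : Finset ℕ → Finset ℕ,
    (∀ x : Finset ℕ, x ⊆ Finset.Icc 1 r → x.card = p →
      f x ⊆ Finset.Icc 1 r ∧ (f x).card = p) →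
    (∃ x y : Finset ℕ, x ⊆ Finset.Icc 1 r ∧ x.card = p ∧
      y ⊆ Finset.Icc 1 r ∧ y.card = p ∧ f x ≠ f y) →
    ∃ x y : Finset ℕ, x ⊆ Finset.Icc 1 r ∧ x.card = p ∧
      y ⊆ Finset.Icc 1 r ∧ y.card = p ∧ x ≠ y ∧
      (f x ∩ f y).card = (x ∩ y).card

open Finset

/-- A function realizing a bijection between two equal-cardinality finsets of naturals. -/
lemma exists_bij_fun (s t : Finset ℕ) (h : s.card = t.card) :
    ∃ f : ℕ → ℕ, Set.InjOn f ↑s ∧ Finset.image f s = t := by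
  classical
  let e : {x // x ∈ s} ≃ {x // x ∈ t} := Finset.equivOfCardEq h
  refine ⟨fun n => if hn : n ∈ s then (e ⟨n, hn⟩ : ℕ) else 0, ?_, ?_⟩
  · intro a ha b hb hab
    simp only [Finset.mem_coe] at ha hb
    simp only [dif_pos ha, dif_pos hb] at hab
    have := e.injective (Subtype.ext hab)
    exact congrArg Subtype.val this
  · apply Finset.eq_of_subset_of_card_le
    · intro b hb
      rw [Finset.mem_image] at hb
      obtain ⟨a, ha, rfl⟩ := hb
      simp only [dif_pos ha]
      exact (e ⟨a, ha⟩).2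
    · rw [← h]
      apply Finset.card_le_card_of_injOn (fun n => if hn : n ∈ s then (e ⟨n, hn⟩ : ℕ) else 0)
      · intro a ha; exact Finset.mem_image_of_mem _ ha
      · intro a ha b hb hab
        simp only [Finset.mem_coe] at ha hb
        simp only [dif_pos ha, dif_pos hb] at hab
        exact congrArg Subtype.val (e.injective (Subtype.ext hab))
/-- Extend an injection defined on `s ⊆ u` into `v` to a bijection `u → v`. -/
lemma exists_extend (u v s : Finset ℕ) (f : ℕ → ℕ) (hs : s ⊆ u)
    (hcu : u.card = v.card) (hinj : Set.InjOn f ↑s) (himg : Finset.image f s ⊆ v) :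
    ∃ g : ℕ → ℕ, Set.InjOn g ↑u ∧ Finset.image g u = v ∧ ∀ a ∈ s, g a = f a := by
  classical
  set t : Finset ℕ := Finset.image f s with ht
  have hts : t.card = s.card := Finset.card_image_of_injOn hinj
  have hcd : (u \ s).card = (v \ t).card := by
    rw [Finset.card_sdiff_of_subset hs, Finset.card_sdiff_of_subset himg, hcu, hts]
  obtain ⟨h0, h0inj, h0img⟩ := exists_bij_fun (u \ s) (v \ t) hcd
  refine ⟨fun a => if a ∈ s then f a else h0 a, ?_, ?_, ?_⟩
  · intro a ha b hb hab
    simp only [Finset.mem_coe] at ha hb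
    by_cases has : a ∈ s <;> by_cases hbs : b ∈ s
    · simp only [if_pos has, if_pos hbs] at hab; exact hinj has hbs hab
    · simp only [if_pos has, if_neg hbs] at hab
      have h1 : f a ∈ t := Finset.mem_image_of_mem f has
      have h2 : h0 b ∈ v \ t := h0img ▸ Finset.mem_image_of_mem h0 (Finset.mem_sdiff.2 ⟨hb, hbs⟩)
      rw [hab] at h1
      exact absurd h1 (Finset.mem_sdiff.1 h2).2
    · simp only [if_neg has, if_pos hbs] at hab
      have h1 : f b ∈ t := Finset.mem_image_of_mem f hbs
      have h2 : h0 a ∈ v \ t := h0img ▸ Finset.mem_image_of_mem h0 (Finset.mem_sdiff.2 ⟨ha, has⟩)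
      rw [← hab] at h1
      exact absurd h1 (Finset.mem_sdiff.1 h2).2
    · simp only [if_neg has, if_neg hbs] at hab
      exact h0inj (by simp [Finset.mem_sdiff, ha, has]) (by simp [Finset.mem_sdiff, hb, hbs]) hab
  · have hu : u = s ∪ (u \ s) := (Finset.union_sdiff_of_subset hs).symm
    rw [hu, Finset.image_union]
    have e1 : Finset.image (fun a => if a ∈ s then f a else h0 a) s = t := by
      rw [ht]; apply Finset.image_congr; intro a ha; simp only [Finset.mem_coe] at ha; simp [ha]
    have e2 : Finset.image (fun a => if a ∈ s then f a else h0 a) (u \ s) = v \ t := by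
      rw [← h0img]; apply Finset.image_congr
      intro a ha; simp only [Finset.mem_coe, Finset.mem_sdiff] at ha; simp [ha.2]
    rw [e1, e2, Finset.union_sdiff_of_subset himg]
  · intro a ha; simp [ha]

/-- Build an equivalence of coercions from a bijective function between finsets. -/
noncomputable def mkE (s t : Finset ℕ) (g : ℕ → ℕ) (h1 : Set.InjOn g ↑s)
    (h2 : Finset.image g s = t) : {x // x ∈ s} ≃ {x // x ∈ t} :=
  Equiv.ofBijective
    (fun a : {x // x ∈ s} => (⟨g a, h2 ▸ Finset.mem_image_of_mem g a.2⟩ : {x // x ∈ t}))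
    (by
      rw [Fintype.bijective_iff_injective_and_card]
      constructor
      · intro a b hab
        exact Subtype.ext (h1 (Finset.mem_coe.2 a.2) (Finset.mem_coe.2 b.2)
          (congrArg Subtype.val hab))
      · rw [Fintype.card_coe, Fintype.card_coe, ← h2, Finset.card_image_of_injOn h1])

lemma mkE_apply (s t : Finset ℕ) (g : ℕ → ℕ) (h1 : Set.InjOn g ↑s)
    (h2 : Finset.image g s = t) (a : {x // x ∈ s}) : (mkE s t g h1 h2 a : ℕ) = g a := rfl

/-- The function `ℕ → ℕ` associated to an equivalence between finset coercions. -/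
noncomputable def omap {s t : Finset ℕ} (E : {x // x ∈ s} ≃ {x // x ∈ t}) : ℕ → ℕ :=
  fun n => if h : n ∈ s then (E ⟨n, h⟩ : ℕ) else 0

lemma omap_apply {s t : Finset ℕ} (E : {x // x ∈ s} ≃ {x // x ∈ t}) {n : ℕ} (h : n ∈ s) :
    omap E n = (E ⟨n, h⟩ : ℕ) := dif_pos h

lemma omap_mem {s t : Finset ℕ} (E : {x // x ∈ s} ≃ {x // x ∈ t}) {n : ℕ} (h : n ∈ s) :
    omap E n ∈ t := by rw [omap_apply E h]; exact (E ⟨n, h⟩).2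

lemma omap_injOn {s t : Finset ℕ} (E : {x // x ∈ s} ≃ {x // x ∈ t}) :
    Set.InjOn (omap E) ↑s := by
  intro a ha b hb hab
  simp only [Finset.mem_coe] at ha hb
  rw [omap_apply E ha, omap_apply E hb] at hab
  exact congrArg Subtype.val (E.injective (Subtype.ext hab))

lemma omap_image {s t : Finset ℕ} (E : {x // x ∈ s} ≃ {x // x ∈ t}) :
    Finset.image (omap E) s = t := by
  apply Finset.eq_of_subset_of_card_le
  · intro b hb
    rw [Finset.mem_image] at hb
    obtain ⟨a, ha, rfl⟩ := hb
    exact omap_mem E ha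
  · rw [Finset.card_image_of_injOn (omap_injOn E)]
    have := Fintype.card_congr E
    rw [Fintype.card_coe, Fintype.card_coe] at this
    exact this.ge

lemma omap_image_sub {s t : Finset ℕ} (E : {x // x ∈ s} ≃ {x // x ∈ t}) {A : Finset ℕ}
    (hA : A ⊆ s) : Finset.image (omap E) A ⊆ t := by
  intro b hb
  rw [Finset.mem_image] at hb
  obtain ⟨a, ha, rfl⟩ := hb
  exact omap_mem E (hA ha)

lemma omap_card_image {s t : Finset ℕ} (E : {x // x ∈ s} ≃ {x // x ∈ t}) {A : Finset ℕ}
    (hA : A ⊆ s) : (Finset.image (omap E) A).card = A.card :=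
  Finset.card_image_of_injOn ((omap_injOn E).mono (by exact_mod_cast hA))

lemma omap_trans {s t w : Finset ℕ} (E : {x // x ∈ s} ≃ {x // x ∈ t})
    (F : {x // x ∈ t} ≃ {x // x ∈ w}) {n : ℕ} (h : n ∈ s) :
    omap (E.trans F) n = omap F (omap E n) := by
  rw [omap_apply (E.trans F) h, omap_apply E h, omap_apply F (E ⟨n, h⟩).2]
  rfl

noncomputable instance (u v : Finset ℕ) : Fintype ({x // x ∈ u} ≃ {x // x ∈ v}) := by
  classical exact Fintype.ofFinite _

lemma count_le (u v : Finset ℕ) (huv : u.card = v.card) {A A' z z' : Finset ℕ}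
    (hA : A ⊆ u) (hA' : A' ⊆ u) (hAc : A.card = A'.card)
    (hz : z ⊆ v) (hz' : z' ⊆ v) (hzc : z.card = z'.card) :
    (Finset.univ.filter
      (fun E : {x // x ∈ u} ≃ {x // x ∈ v} => Finset.image (omap E) A = z)).card ≤
    (Finset.univ.filter
      (fun E : {x // x ∈ u} ≃ {x // x ∈ v} => Finset.image (omap E) A' = z')).card := by
  classical
  obtain ⟨f0, f0inj, f0img⟩ := exists_bij_fun A' A hAc.symm
  obtain ⟨g', g'inj, g'img, g'eq⟩ := exists_extend u u A' f0 hA' rfl f0inj (f0img ▸ hA)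
  obtain ⟨f1, f1inj, f1img⟩ := exists_bij_fun z z' hzc
  obtain ⟨g, ginj, gimg, geq⟩ := exists_extend v v z f1 hz rfl f1inj (f1img ▸ hz')
  set σ₁ := mkE u u g' g'inj g'img with hσ₁
  set σ₂ := mkE v v g ginj gimg with hσ₂
  have himg1 : Finset.image g' A' = A := by
    rw [← f0img]; exact Finset.image_congr (fun a ha => g'eq a (Finset.mem_coe.1 ha))
  have himg2 : Finset.image g z = z' := by
    rw [← f1img]; exact Finset.image_congr (fun a ha => geq a (Finset.mem_coe.1 ha))
  apply Finset.card_le_card_of_injOn (fun E => σ₁.trans (E.trans σ₂))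
  · intro E hE
    rw [Finset.mem_coe, Finset.mem_filter] at hE ⊢
    refine ⟨Finset.mem_univ _, ?_⟩
    have step : ∀ a ∈ A', omap (σ₁.trans (E.trans σ₂)) a = omap σ₂ (omap E (g' a)) := by
      intro a ha
      rw [omap_trans σ₁ (E.trans σ₂) (hA' ha), omap_trans E σ₂ ?_, omap_apply σ₁ (hA' ha)]
      · rw [mkE_apply]
      · rw [omap_apply σ₁ (hA' ha), mkE_apply]
        have hgu : g' a ∈ u := by
          rw [← g'img]; exact Finset.mem_image_of_mem g' (hA' ha)
        exact hgu
    calc Finset.image (omap (σ₁.trans (E.trans σ₂))) A'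
        = Finset.image (fun a => omap σ₂ (omap E (g' a))) A' :=
          Finset.image_congr (fun a ha => step a (Finset.mem_coe.1 ha))
      _ = Finset.image (omap σ₂) (Finset.image (omap E) (Finset.image g' A')) := by
          rw [Finset.image_image, Finset.image_image]; rfl
      _ = Finset.image (omap σ₂) z := by rw [himg1, hE.2]
      _ = Finset.image g z := Finset.image_congr (fun a ha => by
          rw [omap_apply σ₂ (hz (Finset.mem_coe.1 ha)), mkE_apply])
      _ = z' := himg2
  · intro E _ E' _ h
    apply Equiv.ext; intro y
    obtain ⟨x, rfl⟩ := σ₁.surjective y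
    have hx : σ₂ (E (σ₁ x)) = σ₂ (E' (σ₁ x)) := by
      have := congrArg (fun F : {x // x ∈ u} ≃ {x // x ∈ v} => F x) h
      simpa [Equiv.trans_apply] using this
    exact σ₂.injective hx

lemma exists_special (u v : Finset ℕ) (huv : u.card = v.card) {p : ℕ} {A B IA IB : Finset ℕ}
    (hAu : A ⊆ u) (hAc : A.card = p) (hBu : B ⊆ u) (hBc : B.card = p)
    (hIAv : IA ⊆ v) (hIAc : IA.card = p) (hIBv : IB ⊆ v) (hIBc : IB.card = p)
    (hk : (IA ∩ IB).card = (A ∩ B).card) :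
    ∃ E : {x // x ∈ u} ≃ {x // x ∈ v},
      Finset.image (omap E) A = IA ∧ Finset.image (omap E) B = IB := by
  classical
  obtain ⟨f1, f1inj, f1img⟩ := exists_bij_fun (A ∩ B) (IA ∩ IB) hk.symm
  obtain ⟨gA, gAinj, gAimg, gAeq⟩ := exists_extend A IA (A ∩ B) f1 Finset.inter_subset_left
    (hAc.trans hIAc.symm) f1inj (f1img ▸ Finset.inter_subset_left)
  have hcardU : (A ∪ B).card = (IA ∪ IB).card := by
    have h1 := Finset.card_union_add_card_inter A B
    have h2 := Finset.card_union_add_card_inter IA IB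
    omega
  obtain ⟨g2, g2inj, g2img, g2eq⟩ := exists_extend (A ∪ B) (IA ∪ IB) A gA
    Finset.subset_union_left hcardU gAinj (gAimg ▸ Finset.subset_union_left)
  obtain ⟨g, ginj, gimg, geq⟩ := exists_extend u v (A ∪ B) g2
    (Finset.union_subset hAu hBu) huv g2inj
    (by rw [g2img]; exact Finset.union_subset hIAv hIBv)
  set E := mkE u v g ginj gimg with hE
  have homap : ∀ a ∈ u, omap E a = g a := fun a ha => by rw [hE, omap_apply _ ha, mkE_apply]
  have hgA : ∀ a ∈ A, g a = gA a := fun a ha =>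
    (geq a (Finset.mem_union_left B ha)).trans (g2eq a ha)
  have himgA : Finset.image g A = IA := by
    rw [← gAimg]; exact Finset.image_congr (fun a ha => hgA a (Finset.mem_coe.1 ha))
  have himgEA : Finset.image (omap E) A = IA := by
    rw [← himgA]
    exact Finset.image_congr (fun a ha => homap a (hAu (Finset.mem_coe.1 ha)))
  refine ⟨E, himgEA, ?_⟩
  have hBsplit : B \ A ∪ B ∩ A = B := Finset.sdiff_union_inter B A
  have hginter : Finset.image g (B ∩ A) = IA ∩ IB := by
    rw [Finset.inter_comm B A, ← f1img]
    apply Finset.image_congr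
    intro a ha
    rw [Finset.mem_coe] at ha
    rw [hgA a (Finset.mem_of_mem_inter_left ha), gAeq a ha]
  have hgdiff : Finset.image g (B \ A) = IB \ IA := by
    apply Finset.eq_of_subset_of_card_le
    · intro x hx
      rw [Finset.mem_image] at hx
      obtain ⟨b, hb, rfl⟩ := hx
      have hbBA : b ∈ B \ A := hb
      rw [Finset.mem_sdiff] at hbBA
      have hmem : g b ∈ IA ∪ IB := by
        rw [← g2img, geq b (Finset.mem_union_right A hbBA.1)]
        exact Finset.mem_image_of_mem g2 (Finset.mem_union_right A hbBA.1)
      have hnot : g b ∉ IA := by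
        intro hgb
        rw [← himgA, Finset.mem_image] at hgb
        obtain ⟨a, haA, hag⟩ := hgb
        have : a = b := ginj (Finset.mem_coe.2 (hAu haA))
          (Finset.mem_coe.2 (hBu hbBA.1)) hag
        exact hbBA.2 (this ▸ haA)
      have : g b ∈ (IA ∪ IB) \ IA := Finset.mem_sdiff.2 ⟨hmem, hnot⟩
      rwa [Finset.union_sdiff_left] at this
    · have hDc : (Finset.image g (B \ A)).card = (B \ A).card := by
        apply Finset.card_image_of_injOn
        apply ginj.mono
        intro a ha
        rw [Finset.mem_coe] at ha ⊢
        exact hBu (Finset.mem_sdiff.1 ha).1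
      have h1 := Finset.card_sdiff_add_card_inter B A
      have h2 := Finset.card_sdiff_add_card_inter IB IA
      have h3 : (IB ∩ IA).card = (B ∩ A).card := by
        rw [Finset.inter_comm IB IA, Finset.inter_comm B A]; exact hk
      omega
  have himgEB : Finset.image (omap E) B = Finset.image g B := by
    exact Finset.image_congr (fun a ha => homap a (hBu (Finset.mem_coe.1 ha)))
  rw [himgEB, ← hBsplit, Finset.image_union, hgdiff, hginter, Finset.inter_comm IA IB,
    Finset.sdiff_union_inter]

lemma main_lemma (u v : Finset ℕ) (huv : u.card = v.card) (p : ℕ)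
    (I : Finset ℕ → Finset ℕ)
    (hI : ∀ A, A ⊆ u → A.card = p → I A ⊆ v ∧ (I A).card = p)
    (hpair : ∃ A B, A ⊆ u ∧ A.card = p ∧ B ⊆ u ∧ B.card = p ∧ A ≠ B ∧
      (I A ∩ I B).card = (A ∩ B).card) :
    ∃ σ : ℕ → ℕ, Set.InjOn σ ↑u ∧ Finset.image σ u = v ∧
      ∀ A, A ⊆ u → A.card = p → Finset.image σ A ≠ I A := by
  classical
  obtain ⟨A₀, B₀, hA₀u, hA₀c, hB₀u, hB₀c, hAB, hk⟩ := hpair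
  by_contra hcon
  push_neg at hcon
  set Ω := ({x // x ∈ u} ≃ {x // x ∈ v}) with hΩ
  set P := u.powersetCard p with hP
  set Q := v.powersetCard p with hQ
  set c : Finset ℕ → Finset ℕ → ℕ := fun A z =>
    (Finset.univ.filter (fun E : Ω => Finset.image (omap E) A = z)).card with hc
  have hIA₀ := hI A₀ hA₀u hA₀c
  have hIB₀ := hI B₀ hB₀u hB₀c
  have hconst : ∀ A ∈ P, ∀ z ∈ Q, c A z = c A₀ (I A₀) := by
    intro A hA z hz
    rw [Finset.mem_powersetCard] at hA hz
    apply le_antisymm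
    · exact count_le u v huv hA.1 hA₀u (hA.2.trans hA₀c.symm) hz.1 hIA₀.1
        (hz.2.trans hIA₀.2.symm)
    · exact count_le u v huv hA₀u hA.1 (hA₀c.trans hA.2.symm) hIA₀.1 hz.1
        (hIA₀.2.trans hz.2.symm)
  have hA₀P : A₀ ∈ P := Finset.mem_powersetCard.2 ⟨hA₀u, hA₀c⟩
  have hB₀P : B₀ ∈ P := Finset.mem_powersetCard.2 ⟨hB₀u, hB₀c⟩
  have hQmem : ∀ (E : Ω) (A : Finset ℕ), A ⊆ u → A.card = p →
      Finset.image (omap E) A ∈ Q := fun E A hAu hAc =>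
    Finset.mem_powersetCard.2 ⟨omap_image_sub E hAu, (omap_card_image E hAu).trans hAc⟩
  have hfiber : ∑ z ∈ Q, c A₀ z = Fintype.card Ω := by
    rw [← Finset.card_univ]
    exact (Finset.card_eq_sum_card_fiberwise (fun E _ => hQmem E A₀ hA₀u hA₀c)).symm
  have hsum1 : ∑ A ∈ P, c A (I A) = Fintype.card Ω := by
    have e1 : ∑ A ∈ P, c A (I A) = P.card * c A₀ (I A₀) := by
      rw [Finset.sum_congr rfl (fun A hA => by
        have hA' := Finset.mem_powersetCard.1 hA
        exact hconst A hA (I A) (Finset.mem_powersetCard.2 (hI A hA'.1 hA'.2)))]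
      rw [Finset.sum_const, smul_eq_mul]
    have e2 : ∑ z ∈ Q, c A₀ z = Q.card * c A₀ (I A₀) := by
      rw [Finset.sum_congr rfl (fun z hz => hconst A₀ hA₀P z hz), Finset.sum_const,
        smul_eq_mul]
    calc ∑ A ∈ P, c A (I A) = P.card * c A₀ (I A₀) := e1
      _ = Q.card * c A₀ (I A₀) := by
          simp only [hP, hQ, Finset.card_powersetCard, huv]
      _ = ∑ z ∈ Q, c A₀ z := e2.symm
      _ = Fintype.card Ω := hfiber
  have hbad : ∀ E : Ω, 1 ≤ (P.filter (fun A => Finset.image (omap E) A = I A)).card := by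
    intro E
    obtain ⟨A, hAu, hAc, hAeq⟩ := hcon (omap E) (omap_injOn E) (omap_image E)
    rw [Nat.one_le_iff_ne_zero, ← Nat.pos_iff_ne_zero, Finset.card_pos]
    exact ⟨A, Finset.mem_filter.2 ⟨Finset.mem_powersetCard.2 ⟨hAu, hAc⟩, hAeq⟩⟩
  obtain ⟨E₀, hE₀A, hE₀B⟩ := exists_special u v huv hA₀u hA₀c hB₀u hB₀c hIA₀.1 hIA₀.2
    hIB₀.1 hIB₀.2 hk
  have hE₀2 : 1 < (P.filter (fun A => Finset.image (omap E₀) A = I A)).card := by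
    rw [Finset.one_lt_card]
    exact ⟨A₀, Finset.mem_filter.2 ⟨hA₀P, hE₀A⟩, B₀, Finset.mem_filter.2 ⟨hB₀P, hE₀B⟩, hAB⟩
  have hdouble : ∑ A ∈ P, c A (I A) =
      ∑ E ∈ (Finset.univ : Finset Ω), (P.filter (fun A => Finset.image (omap E) A = I A)).card := by
    simp only [hc, Finset.card_filter]
    exact Finset.sum_comm
  have hlt : Fintype.card Ω < Fintype.card Ω := by
    calc Fintype.card Ω = ∑ _E ∈ (Finset.univ : Finset Ω), 1 := by
          rw [Finset.sum_const, smul_eq_mul, mul_one, Finset.card_univ]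
      _ < ∑ E ∈ (Finset.univ : Finset Ω),
            (P.filter (fun A => Finset.image (omap E) A = I A)).card :=
          Finset.sum_lt_sum (fun E _ => hbad E) ⟨E₀, Finset.mem_univ _, hE₀2⟩
      _ = ∑ A ∈ P, c A (I A) := hdouble.symm
      _ = Fintype.card Ω := hsum1
  exact lt_irrefl _ hlt

theorem stmt_7 (r p : ℕ) (hp : 1 ≤ p) (hpr : p ≤ r)
    (hfip : FixedIntersectionProperty r p)
    (e : Finset ℕ) (he : e.card = r)
    (I : Finset ℕ → Finset ℕ)
    (hI : ∀ A : Finset ℕ, A ⊆ e → A.card = p → I A ⊆ Finset.Icc 1 r ∧ (I A).card = p)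
    (hne : ∃ A B : Finset ℕ, A ⊆ e ∧ A.card = p ∧ B ⊆ e ∧ B.card = p ∧ I A ≠ I B) :
    ∃ σ : ℕ → ℕ, Set.InjOn σ ↑e ∧ Finset.image σ e = Finset.Icc 1 r ∧
      ∀ A : Finset ℕ, A ⊆ e → A.card = p → Finset.image σ A ≠ I A := by
  classical
  have huv : e.card = (Finset.Icc 1 r).card := by rw [he, Nat.card_Icc]; omega
  obtain ⟨τ, τinj, τimg⟩ := exists_bij_fun e (Finset.Icc 1 r) huv
  set pre : Finset ℕ → Finset ℕ := fun z => e.filter (fun n => τ n ∈ z) with hpre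
  have preP : ∀ z, pre z ⊆ e := fun z => Finset.filter_subset _ _
  have preimg : ∀ z, z ⊆ Finset.Icc 1 r → Finset.image τ (pre z) = z := by
    intro z hz
    ext b
    constructor
    · intro hb
      rw [Finset.mem_image] at hb
      obtain ⟨n, hn, rfl⟩ := hb
      exact (Finset.mem_filter.1 hn).2
    · intro hb
      have : b ∈ Finset.image τ e := τimg ▸ hz hb
      rw [Finset.mem_image] at this
      obtain ⟨n, hn, rfl⟩ := this
      exact Finset.mem_image_of_mem τ (Finset.mem_filter.2 ⟨hn, hb⟩)
  have precard : ∀ z, z ⊆ Finset.Icc 1 r → (pre z).card = z.card := by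
    intro z hz
    conv_rhs => rw [← preimg z hz]
    exact (Finset.card_image_of_injOn (τinj.mono (by exact_mod_cast preP z))).symm
  set f : Finset ℕ → Finset ℕ := fun z => I (pre z) with hf
  have hf1 : ∀ x : Finset ℕ, x ⊆ Finset.Icc 1 r → x.card = p →
      f x ⊆ Finset.Icc 1 r ∧ (f x).card = p := by
    intro x hx hxc
    exact hI (pre x) (preP x) ((precard x hx).trans hxc)
  have hf2 : ∃ x y : Finset ℕ, x ⊆ Finset.Icc 1 r ∧ x.card = p ∧
      y ⊆ Finset.Icc 1 r ∧ y.card = p ∧ f x ≠ f y := by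
    obtain ⟨A, B, hAe, hAc, hBe, hBc, hABne⟩ := hne
    have hxsub : Finset.image τ A ⊆ Finset.Icc 1 r := by
      rw [← τimg]; exact Finset.image_subset_image hAe
    have hysub : Finset.image τ B ⊆ Finset.Icc 1 r := by
      rw [← τimg]; exact Finset.image_subset_image hBe
    have hxc : (Finset.image τ A).card = p := by
      rw [Finset.card_image_of_injOn (τinj.mono (by exact_mod_cast hAe))]; exact hAc
    have hyc : (Finset.image τ B).card = p := by
      rw [Finset.card_image_of_injOn (τinj.mono (by exact_mod_cast hBe))]; exact hBc
    have hpreA : pre (Finset.image τ A) = A := by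
      ext n
      rw [hpre]
      simp only [Finset.mem_filter, Finset.mem_image]
      constructor
      · rintro ⟨hn, a, haA, hae⟩
        exact τinj (Finset.mem_coe.2 (hAe haA)) (Finset.mem_coe.2 hn) hae ▸ haA
      · intro hn
        exact ⟨hAe hn, n, hn, rfl⟩
    have hpreB : pre (Finset.image τ B) = B := by
      ext n
      rw [hpre]
      simp only [Finset.mem_filter, Finset.mem_image]
      constructor
      · rintro ⟨hn, a, haA, hae⟩
        exact τinj (Finset.mem_coe.2 (hBe haA)) (Finset.mem_coe.2 hn) hae ▸ haA
      · intro hn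
        exact ⟨hBe hn, n, hn, rfl⟩
    refine ⟨Finset.image τ A, Finset.image τ B, hxsub, hxc, hysub, hyc, ?_⟩
    rw [hf]
    simp only [hpreA, hpreB]
    exact hABne
  obtain ⟨x, y, hx, hxc, hy, hyc, hxy, hcard⟩ := hfip f hf1 hf2
  refine main_lemma e (Finset.Icc 1 r) huv p I hI ⟨pre x, pre y, preP x,
    (precard x hx).trans hxc, preP y, (precard y hy).trans hyc, ?_, ?_⟩
  · intro hxyeq
    exact hxy (by rw [← preimg x hx, ← preimg y hy, hxyeq])
  · have hinter : pre x ∩ pre y = pre (x ∩ y) := by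
      ext n
      simp only [hpre, Finset.mem_inter, Finset.mem_filter]
      tauto
    rw [hinter, precard (x ∩ y) ((Finset.inter_subset_left).trans hx)]
    exact hcard
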